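/- Let T₃ be the 3-regular tree with its graph metric. There exist a map W : ℤ → T₃ and a constant C such that: d_{T₃}(W(a), W(b)) ≤ |a − b| for all a, b ∈ ℤ; every vertex of T₃ has at most 3 preimages under W; and d_{T₃}(W(0), W(b)) ≤ C·log(1 + |b|) + C for all b ∈ ℤ. -/

import Mathlib

open Metric Set

/-- A metric space is 1-uniformly discrete. -/
def UnifDiscrete (X : Type*) [MetricSpace X] : Prop :=
  ∀ x y : X, x ≠ y → 1 ≤ dist x y

/-- Bounded geometry: balls of each radius have uniformly bounded cardinality. -/
def BddGeom (X : Type*) [MetricSpace X] : Prop :=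
  ∀ R : ℝ, ∃ N : ℕ, ∀ (x : X) (s : Finset X), ↑s ⊆ Metric.closedBall x R → s.card ≤ N

/-- A regular map between metric spaces. -/
def IsRegularMap {X Y : Type*} [MetricSpace X] [MetricSpace Y] (f : X → Y) : Prop :=
  ∃ κ : ℕ, 1 ≤ κ ∧ (∀ x x' : X, dist (f x) (f x') ≤ κ * (1 + dist x x')) ∧
    ∀ y : Y, ∃ c : Finset X, c.card ≤ κ ∧ f ⁻¹' Metric.ball y 1 ⊆ ⋃ x ∈ c, Metric.ball x 1

/-- A quasi-isometric embedding. -/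
def IsQIEmbedding {X Y : Type*} [MetricSpace X] [MetricSpace Y] (f : X → Y) : Prop :=
  ∃ L D : ℝ, 1 ≤ L ∧ 0 ≤ D ∧ ∀ x x' : X,
    L⁻¹ * dist x x' - D ≤ dist (f x) (f x') ∧ dist (f x) (f x') ≤ L * dist x x' + D

/-- A coarse Lipschitz map. -/
def CoarseLipschitz {X Y : Type*} [MetricSpace X] [MetricSpace Y] (f : X → Y) : Prop :=
  ∃ K : ℝ, 1 ≤ K ∧ ∀ x x' : X, dist (f x) (f x') ≤ K * dist x x' + K

/-- The metric of `T` is the graph metric of a 3-regular tree. -/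
def IsCubicTreeMetric (T : Type*) [MetricSpace T] : Prop :=
  ∃ G : SimpleGraph T, G.Connected ∧ G.IsAcyclic ∧
    (∀ v : T, (G.neighborSet v).ncard = 3) ∧
    ∀ u v : T, dist u v = (G.dist u v : ℝ)

/-- The metric of `Z` is the graph metric of a connected graph of uniformly bounded degree. -/
def IsBddDegGraphMetric (Z : Type*) [MetricSpace Z] : Prop :=
  ∃ G : SimpleGraph Z, G.Connected ∧
    (∃ D : ℕ, ∀ v : Z, (G.neighborSet v).ncard ≤ D) ∧
    ∀ u v : Z, dist u v = (G.dist u v : ℝ)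

/-- A non-decreasing subexponential function `[0,∞) → [0,∞)`. -/
def SubexpFun (g : ℝ → ℝ) : Prop :=
  MonotoneOn g (Set.Ici 0) ∧ (∀ r : ℝ, 0 ≤ g r) ∧
    Filter.Tendsto (fun r => Real.log (g r) / r) Filter.atTop (nhds 0)

/-- Every ball of radius `r` in `Z` contains at most `g r` points. -/
def HasGrowthBound (Z : Type*) [MetricSpace Z] (g : ℝ → ℝ) : Prop :=
  ∀ (z : Z) (r : ℝ), 0 ≤ r → ∀ s : Finset Z, ↑s ⊆ Metric.closedBall z r → (s.card : ℝ) ≤ g r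

def HasSubexpGrowth (Z : Type*) [MetricSpace Z] : Prop :=
  ∃ g : ℝ → ℝ, SubexpFun g ∧ HasGrowthBound Z g

def HasPolyGrowth (Z : Type*) [MetricSpace Z] : Prop :=
  ∃ (C : ℝ) (d : ℕ), 1 ≤ C ∧ HasGrowthBound Z (fun r => C * r ^ d + C)

/-- Distinct members of the family are at distance at least `r` from each other. -/
def SepFamily {X : Type*} [MetricSpace X] (r : ℝ) (𝒰 : Set (Set X)) : Prop :=
  ∀ U ∈ 𝒰, ∀ V ∈ 𝒰, U ≠ V → ∀ x ∈ U, ∀ y ∈ V, r ≤ dist x y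

/-- A decomposition of `X` into `n+1` colours of `r`-separated pieces. -/
def Decomp {X : Type*} [MetricSpace X] (n : ℕ) (r : ℝ) (𝒰 : Fin (n+1) → Set (Set X)) : Prop :=
  (∀ x : X, ∃ i, ∃ U ∈ 𝒰 i, x ∈ U) ∧ ∀ i, SepFamily r (𝒰 i)

/-- A collection of subsets of `X` has growth uniformly controlled by the family `F`. -/
def FGrowing {X : Type*} [MetricSpace X] (F : Set (ℝ → ℝ)) (𝒰 : Set (Set X)) : Prop :=
  ∃ f ∈ F, ∃ C : ℝ, 1 ≤ C ∧ ∀ U ∈ 𝒰, ∀ (x : X) (r : ℝ), 0 ≤ r →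
    ∀ s : Finset X, ↑s ⊆ U ∩ Metric.closedBall x r → (s.card : ℝ) ≤ C * f (C * r) + C

/-- `asdim_F X ≤ n`. -/
def AsdimLE (F : Set (ℝ → ℝ)) (X : Type*) [MetricSpace X] (n : ℕ) : Prop :=
  ∀ r : ℝ, 0 < r → ∃ 𝒰 : Fin (n+1) → Set (Set X),
    Decomp n r 𝒰 ∧ FGrowing F (⋃ i, 𝒰 i)

/-- Iterated neighbourhoods `N^m_s(Y)` of `Y` with respect to the collection `𝒴`. -/
def iterNbhd {X : Type*} [MetricSpace X] (𝒴 : Set (Set X)) (s : ℝ) : ℕ → Set X → Set X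
  | 0, Y => Y
  | m + 1, Y => ⋃₀ {Y' | Y' ∈ 𝒴 ∧ ∃ x ∈ Y', ∃ z ∈ iterNbhd 𝒴 s m Y, dist x z ≤ s}

/-- `ov-asdim_F X ≤ n`. -/
def OvAsdimLE (F : Set (ℝ → ℝ)) (X : Type*) [MetricSpace X] (n : ℕ) : Prop :=
  ∀ r : ℝ, 0 < r → ∃ 𝒰 : Fin (n+1) → Set (Set X),
    Decomp n r 𝒰 ∧ ∀ s : ℝ, 1 ≤ s → ∀ m : ℕ,
      FGrowing F ((iterNbhd (⋃ i, 𝒰 i) s m) '' (⋃ i, 𝒰 i))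

/-- A family of non-decreasing functions `[0,∞) → [0,∞)`. -/
def NondecrFamily (F : Set (ℝ → ℝ)) : Prop :=
  ∀ f ∈ F, MonotoneOn f (Set.Ici 0) ∧ ∀ r : ℝ, 0 ≤ r → 0 ≤ f r

/-- The family of non-decreasing subexponential functions. -/
def seFamily : Set (ℝ → ℝ) := {g | SubexpFun g}

/-- The family of non-decreasing functions bounded by `C·r^d + C`. -/
def polyFamily (d : ℕ) : Set (ℝ → ℝ) :=
  {f | MonotoneOn f (Set.Ici 0) ∧ (∀ r : ℝ, 0 ≤ f r) ∧
    ∃ C : ℝ, 0 < C ∧ ∀ r : ℝ, 0 ≤ r → f r ≤ C * r ^ d + C}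

/-- `asdim X ≤ n` : classical asymptotic dimension. -/
def ClassicalAsdimLE (X : Type*) [MetricSpace X] (n : ℕ) : Prop :=
  ∀ r : ℝ, 0 < r → ∃ 𝒰 : Fin (n+1) → Set (Set X), Decomp n r 𝒰 ∧
    ∃ B : ℝ, ∀ U ∈ ⋃ i, 𝒰 i, ∀ x ∈ U, ∀ y ∈ U, dist x y ≤ B


namespace LogWalk

open SimpleGraph

variable {T : Type*} {G : SimpleGraph T}

open scoped Classical in

lemma interior_dist (hconn : G.Connected) {r u v : T} {P : G.Walk r u}
    (hlen : P.length = G.dist r u) (hv : v ∈ P.support) (hne : v ≠ u) :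
    G.dist r v + 1 ≤ G.dist r u := by
  have h1 : G.dist r v ≤ (P.takeUntil v hv).length := SimpleGraph.dist_le _
  have h2 : (P.takeUntil v hv).length + (P.dropUntil v hv).length = P.length := by
    have := congrArg Walk.length (P.take_spec hv)
    rwa [Walk.length_append] at this
  have h3 : (P.dropUntil v hv).length ≠ 0 := by
    intro h0
    exact hne (Walk.eq_of_length_eq_zero h0)
  omega

lemma adj_dist_ne (hconn : G.Connected) (hacyc : G.IsAcyclic) (r : T) {u v : T}
    (h : G.Adj u v) : G.dist r u ≠ G.dist r v := by
  intro heq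
  obtain ⟨P, hP, hPlen⟩ := hconn.exists_path_of_dist r u
  have hvP : v ∉ P.support := by
    intro hv
    have := interior_dist hconn hPlen hv h.ne'
    omega
  have hQpath : (P.concat h).IsPath := by
    rw [Walk.isPath_def, Walk.support_concat]
    exact List.Nodup.append (Walk.isPath_def _ |>.mp hP)
      (by simp) (by simpa using fun hx => hvP hx)
  obtain ⟨R, hR, hRlen⟩ := hconn.exists_path_of_dist r v
  have huniq := hacyc.path_unique ⟨P.concat h, hQpath⟩ ⟨R, hR⟩
  have : (P.concat h).length = R.length := by rw [congrArg (·.val.length) huniq]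
  rw [Walk.length_concat, hPlen, hRlen, heq] at this
  omega

lemma parent_unique (hconn : G.Connected) (hacyc : G.IsAcyclic) (r : T) {v p q : T}
    (hp : G.Adj p v) (hq : G.Adj q v) (hdp : G.dist r p + 1 = G.dist r v)
    (hdq : G.dist r q + 1 = G.dist r v) : p = q := by
  obtain ⟨P, hP, hPlen⟩ := hconn.exists_path_of_dist r p
  obtain ⟨Q, hQ, hQlen⟩ := hconn.exists_path_of_dist r q
  have hvP : v ∉ P.support := by
    intro hv
    have := interior_dist hconn hPlen hv hp.ne'
    omega
  have hvQ : v ∉ Q.support := by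
    intro hv
    have := interior_dist hconn hQlen hv hq.ne'
    omega
  have hPpath : (P.concat hp).IsPath := by
    rw [Walk.isPath_def, Walk.support_concat]
    exact List.Nodup.append (Walk.isPath_def _ |>.mp hP) (by simp)
      (by simpa using fun hx => hvP hx)
  have hQpath : (Q.concat hq).IsPath := by
    rw [Walk.isPath_def, Walk.support_concat]
    exact List.Nodup.append (Walk.isPath_def _ |>.mp hQ) (by simp)
      (by simpa using fun hx => hvQ hx)
  have huniq := hacyc.path_unique ⟨P.concat hp, hPpath⟩ ⟨Q.concat hq, hQpath⟩
  have : P.concat hp = Q.concat hq := congrArg Subtype.val huniq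
  obtain ⟨hv, -⟩ := Walk.concat_inj this
  exact hv

lemma adj_dist_le (hconn : G.Connected) (r : T) {u v : T} (h : G.Adj u v) :
    G.dist r v ≤ G.dist r u + 1 := by
  have := hconn.dist_triangle (u := r) (v := u) (w := v)
  have h1 : G.dist u v = 1 := SimpleGraph.dist_eq_one_iff_adj.mpr h
  omega
section Psi
variable {T : Type*} {G : SimpleGraph T}

lemma exists_enum (v : T) (hdeg : (G.neighborSet v).ncard = 3) :
    ∃ f : Fin 3 → T, Function.Injective f ∧ ∀ i, G.Adj v (f i) := by
  rw [Set.ncard_eq_three] at hdeg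
  obtain ⟨a, b, c, hab, hac, hbc, hset⟩ := hdeg
  have hmem : ∀ x ∈ ({a, b, c} : Set T), G.Adj v x := by
    rw [← hset]; exact fun x hx => hx
  refine ⟨![a, b, c], ?_, ?_⟩
  · intro i j hij
    fin_cases i <;> fin_cases j <;> simp_all [Matrix.cons_val_zero, Matrix.cons_val_one]
  · intro i
    fin_cases i
    · exact hmem a (by simp)
    · exact hmem b (by simp)
    · exact hmem c (by simp)

variable (enum : T → Fin 3 → T)

open scoped Classical in
noncomputable def pidx (v p : T) : Fin 3 :=
  if h : ∃ j, enum v j = p then h.choose else 2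

noncomputable def cchild (v p : T) (i : Fin 3) : T :=
  enum v (Equiv.swap (pidx enum v p) 2 i)

lemma cchild_inj {v p : T} (hinj : Function.Injective (enum v)) {i j : Fin 3}
    (h : cchild enum v p i = cchild enum v p j) : i = j := by
  have := hinj h
  exact (Equiv.swap _ 2).injective this

lemma cchild_adj {v p : T} (hadj : ∀ i, G.Adj v (enum v i)) (i : Fin 3) :
    G.Adj v (cchild enum v p i) := hadj _

lemma cchild_ne {v p : T} (hinj : Function.Injective (enum v)) {i : Fin 3} (hi : i ≠ 2) :
    cchild enum v p i ≠ p := by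
  intro hEq
  by_cases h : ∃ j, enum v j = p
  · have hj : enum v (pidx enum v p) = p := by
      unfold pidx
      rw [dif_pos h]
      exact h.choose_spec
    have h2 : Equiv.swap (pidx enum v p) 2 i = pidx enum v p := hinj (hEq.trans hj.symm)
    have h3 : i = (2 : Fin 3) := by
      have h4 := congrArg (Equiv.swap (pidx enum v p) 2) h2
      rwa [Equiv.swap_apply_self, Equiv.swap_apply_left] at h4
    exact hi h3
  · exact h ⟨_, hEq⟩

noncomputable def psiPair (r : T) (t : List (Fin 3)) : T × T :=
  t.foldl (fun vp i => (cchild enum vp.1 vp.2 i, vp.1)) (r, r)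


noncomputable def psi (r : T) (t : List (Fin 3)) : T := (psiPair enum r t).1

lemma psiPair_snoc (r : T) (s : List (Fin 3)) (x : Fin 3) :
    psiPair enum r (s ++ [x]) =
      (cchild enum (psiPair enum r s).1 (psiPair enum r s).2 x, (psiPair enum r s).1) := by
  unfold psiPair
  rw [List.foldl_append]
  rfl

lemma psi_snoc (r : T) (s : List (Fin 3)) (x : Fin 3) :
    psi enum r (s ++ [x]) = cchild enum (psiPair enum r s).1 (psiPair enum r s).2 x := by
  unfold psi
  rw [psiPair_snoc]

/-- Valid lists: all letters after the first differ from 2. -/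
def ValidL (t : List (Fin 3)) : Prop := ∀ x ∈ t.drop 1, x ≠ (2 : Fin 3)

lemma ValidL_of_snoc {s : List (Fin 3)} {x : Fin 3} (h : ValidL (s ++ [x])) : ValidL s := by
  intro y hy
  rcases s with _ | ⟨a, s'⟩
  · simp at hy
  · exact h y (by simpa using Or.inl hy)

lemma ValidL_snoc_ne {s : List (Fin 3)} {x : Fin 3} (h : ValidL (s ++ [x])) (hs : s ≠ []) :
    x ≠ 2 := by
  apply h
  rcases s with _ | ⟨a, s'⟩
  · exact absurd rfl hs
  · simp

lemma psi_adj_snoc (hinj : ∀ v : T, Function.Injective (enum v))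
    (hadj : ∀ (v : T) i, G.Adj v (enum v i)) (r : T) (s : List (Fin 3)) (x : Fin 3) :
    G.Adj (psi enum r s) (psi enum r (s ++ [x])) := by
  rw [psi_snoc]
  exact cchild_adj enum (hadj _) x

lemma psi_level (hconn : G.Connected) (hacyc : G.IsAcyclic)
    (hinj : ∀ v : T, Function.Injective (enum v))
    (hadj : ∀ (v : T) i, G.Adj v (enum v i)) (r : T) :
    ∀ t : List (Fin 3), ValidL t →
      G.dist r (psi enum r t) = t.length ∧
        (t ≠ [] → G.Adj (psi enum r t) (psiPair enum r t).2 ∧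
          G.dist r (psiPair enum r t).2 + 1 = t.length) := by
  intro t
  induction t using List.reverseRecOn with
  | nil =>
    intro _
    constructor
    · simp [psi, psiPair]
    · intro h; exact absurd rfl h
  | append_singleton s x IH =>
    intro hval
    obtain ⟨hdist, hpar⟩ := IH (ValidL_of_snoc hval)
    have hAdjSU : G.Adj (psi enum r s) (psi enum r (s ++ [x])) := psi_adj_snoc enum hinj hadj r s x
    have hd1 : G.dist (psi enum r s) (psi enum r (s ++ [x])) = 1 :=
      SimpleGraph.dist_eq_one_iff_adj.mpr hAdjSU
    have hub : G.dist r (psi enum r (s ++ [x])) ≤ s.length + 1 := by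
      have := adj_dist_le hconn r hAdjSU
      omega
    have hne : G.dist r (psi enum r (s ++ [x])) ≠ s.length := by
      have := adj_dist_ne hconn hacyc r hAdjSU
      omega
    have hlb : s.length ≤ G.dist r (psi enum r (s ++ [x])) + 1 := by
      have := adj_dist_le hconn r hAdjSU.symm
      omega
    have hkey : G.dist r (psi enum r (s ++ [x])) = s.length + 1 := by
      rcases s with _ | ⟨a, s'⟩
      · -- s = [] : the new vertex is adjacent to r
        have hadjr : G.Adj r (psi enum r ([] ++ [x])) := by
          have : psi enum r ([] : List (Fin 3)) = r := by simp [psi, psiPair]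
          rwa [this] at hAdjSU
        simp only [List.length_nil]
        rw [SimpleGraph.dist_eq_one_iff_adj.mpr hadjr]
      · -- s ≠ []
        obtain ⟨hAdjP, hdP⟩ := hpar (by simp)
        by_cases hcase : G.dist r (psi enum r ((a :: s') ++ [x])) + 1 = (a :: s').length
        · exfalso
          have hx2 : x ≠ 2 := ValidL_snoc_ne hval (by simp)
          have hPeq : psi enum r ((a :: s') ++ [x]) = (psiPair enum r (a :: s')).2 :=
            parent_unique hconn hacyc r hAdjSU.symm hAdjP.symm (by omega) (by omega)
          rw [psi_snoc] at hPeq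
          exact cchild_ne enum (hinj _) hx2 hPeq
        · omega
    refine ⟨by simpa using hkey, fun _ => ?_⟩
    rw [psiPair_snoc]
    refine ⟨?_, ?_⟩
    · simpa [psi] using hAdjSU.symm
    · simp only []
      rw [show (psiPair enum r s).1 = psi enum r s from rfl, hdist]
      simp

lemma psi_nil (r : T) : psi enum r ([] : List (Fin 3)) = r := rfl

lemma psi_inj (hconn : G.Connected) (hacyc : G.IsAcyclic)
    (hinj : ∀ v : T, Function.Injective (enum v))
    (hadj : ∀ (v : T) i, G.Adj v (enum v i)) (r : T) :
    ∀ (n : ℕ) (t t' : List (Fin 3)), t.length ≤ n → ValidL t → ValidL t' →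
      psi enum r t = psi enum r t' → t = t' := by
  intro n
  induction n with
  | zero =>
    intro t t' hlen hv hv' heq
    have h0 : t = [] := List.length_eq_zero_iff.mp (Nat.le_zero.mp hlen)
    subst h0
    have hl := (psi_level enum hconn hacyc hinj hadj r t' hv').1
    rw [← heq, psi_nil, SimpleGraph.dist_self] at hl
    exact (List.length_eq_zero_iff.mp hl.symm).symm
  | succ n IHn =>
    intro t t' hlen hv hv' heq
    have hlev := (psi_level enum hconn hacyc hinj hadj r t hv).1
    have hlev' := (psi_level enum hconn hacyc hinj hadj r t' hv').1
    have hlens : t.length = t'.length := by rw [← hlev, ← hlev', heq]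
    rcases t.eq_nil_or_concat with rfl | ⟨sx, x, h⟩
    · simp only [List.length_nil] at hlens
      exact (List.length_eq_zero_iff.mp hlens.symm).symm
    rw [List.concat_eq_append] at h
    subst h
    rcases t'.eq_nil_or_concat with rfl | ⟨sy, y, h'⟩
    · simp at hlens
    rw [List.concat_eq_append] at h'
    subst h'
    have hvs : ValidL sx := ValidL_of_snoc hv
    have hvs' : ValidL sy := ValidL_of_snoc hv'
    have hAdj1 : G.Adj (psi enum r sx) (psi enum r (sx ++ [x])) :=
      psi_adj_snoc enum hinj hadj r sx x
    have hAdj2 : G.Adj (psi enum r sy) (psi enum r (sy ++ [y])) :=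
      psi_adj_snoc enum hinj hadj r sy y
    have hds : G.dist r (psi enum r sx) = sx.length :=
      (psi_level enum hconn hacyc hinj hadj r sx hvs).1
    have hds' : G.dist r (psi enum r sy) = sy.length :=
      (psi_level enum hconn hacyc hinj hadj r sy hvs').1
    have hlx : (sx ++ [x]).length = sx.length + 1 := by simp
    have hly : (sy ++ [y]).length = sy.length + 1 := by simp
    have hpar : psi enum r sx = psi enum r sy := by
      apply parent_unique hconn hacyc r (v := psi enum r (sx ++ [x]))
        hAdj1 (heq ▸ hAdj2) (by omega)
      rw [heq]
      omega
    have hss : sx = sy := IHn sx sy (by omega) hvs hvs' hpar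
    subst hss
    rw [psi_snoc, psi_snoc] at heq
    have hxy : x = y := cchild_inj enum (hinj _) heq
    rw [hxy]

end Psi
section Comb

def Adj3 (a b : List (Fin 3)) : Prop := (∃ x, b = a ++ [x]) ∨ (∃ x, a = b ++ [x])

lemma Adj3_cons (x : Fin 3) {a b : List (Fin 3)} (h : Adj3 a b) : Adj3 (x :: a) (x :: b) := by
  rcases h with ⟨y, rfl⟩ | ⟨y, rfl⟩
  · exact Or.inl ⟨y, rfl⟩
  · exact Or.inr ⟨y, rfl⟩

lemma Adj3_append (s : List (Fin 3)) {a b : List (Fin 3)} (h : Adj3 a b) :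
    Adj3 (s ++ a) (s ++ b) := by
  rcases h with ⟨y, rfl⟩ | ⟨y, rfl⟩
  · exact Or.inl ⟨y, (List.append_assoc _ _ _).symm⟩
  · exact Or.inr ⟨y, (List.append_assoc _ _ _).symm⟩

/-- Our own occurrence count, avoiding `BEq` instance mismatches. -/
def cnt (t : List (Fin 3)) (L : List (List (Fin 3))) : ℕ :=
  L.countP (fun u => decide (u = t))

lemma cnt_nil (t : List (Fin 3)) : cnt t [] = 0 := rfl

lemma cnt_cons (t a : List (Fin 3)) (L : List (List (Fin 3))) :
    cnt t (a :: L) = cnt t L + if a = t then 1 else 0 := by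
  simp [cnt, List.countP_cons]

lemma cnt_append (t : List (Fin 3)) (L₁ L₂ : List (List (Fin 3))) :
    cnt t (L₁ ++ L₂) = cnt t L₁ + cnt t L₂ := by
  simp [cnt, List.countP_append]

lemma cnt_eq_zero {t : List (Fin 3)} {L : List (List (Fin 3))} (h : t ∉ L) : cnt t L = 0 := by
  rw [cnt, List.countP_eq_zero]
  intro a ha
  simp only [decide_eq_true_eq]
  intro rfl'
  exact h (rfl' ▸ ha)

lemma cnt_map_inj {f : List (Fin 3) → List (Fin 3)} (hf : Function.Injective f)
    (q : List (Fin 3)) (L : List (List (Fin 3))) : cnt (f q) (L.map f) = cnt q L := by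
  rw [cnt, List.countP_map, cnt]
  apply List.countP_congr
  intro a _
  simp only [Function.comp_apply, decide_eq_true_eq, decide_eq_decide]
  exact ⟨fun h => hf h, fun h => h ▸ rfl⟩

lemma cnt_le_one_of_mem_le {t : List (Fin 3)} {L : List (List (Fin 3))} : cnt t L ≤ L.length :=
  List.countP_le_length

def Etour : ℕ → List (List (Fin 3))
  | 0 => [[]]
  | d+1 => (([] :: (Etour d).map (List.cons 0)) ++ ([] :: (Etour d).map (List.cons 1))) ++ [[]]

lemma Etour_ne_nil (d : ℕ) : Etour d ≠ [] := by cases d <;> simp [Etour]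

lemma Etour_head (d : ℕ) : (Etour d).head? = some [] := by cases d <;> simp [Etour]

lemma getLast?_cons_ne {α : Type*} (a : α) {l : List α} (h : l ≠ []) :
    (a :: l).getLast? = l.getLast? := by
  have he : a :: l = [a] ++ l := rfl
  rw [he, List.getLast?_append_of_ne_nil _ h]

lemma getLast?_concat' {α : Type*} (l : List α) (a : α) : (l ++ [a]).getLast? = some a := by
  rw [List.getLast?_append_cons]
  rfl

lemma Etour_getLast (d : ℕ) : (Etour d).getLast? = some [] := by
  cases d with
  | zero => rfl
  | succ d => rw [Etour, getLast?_concat']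

lemma Etour_chain (d : ℕ) : List.Chain' Adj3 (Etour d) := by
  induction d with
  | zero => simp [Etour, List.Chain']
  | succ d IH =>
    have hm0 : List.Chain' Adj3 ((Etour d).map (List.cons 0)) :=
      List.isChain_map_of_isChain _ (fun a b h => Adj3_cons 0 h) IH
    have hm1 : List.Chain' Adj3 ((Etour d).map (List.cons 1)) :=
      List.isChain_map_of_isChain _ (fun a b h => Adj3_cons 1 h) IH
    have hhead0 : ((Etour d).map (List.cons 0)).head? = some [0] := by
      rw [List.head?_map, Etour_head]; rfl
    have hhead1 : ((Etour d).map (List.cons 1)).head? = some [1] := by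
      rw [List.head?_map, Etour_head]; rfl
    have hlast0 : ((Etour d).map (List.cons 0)).getLast? = some [0] := by
      rw [List.getLast?_map, Etour_getLast]; rfl
    have hlast1 : ((Etour d).map (List.cons 1)).getLast? = some [1] := by
      rw [List.getLast?_map, Etour_getLast]; rfl
    have hne0 : (Etour d).map (List.cons (0 : Fin 3)) ≠ [] := by
      simpa using Etour_ne_nil d
    have hne1 : (Etour d).map (List.cons (1 : Fin 3)) ≠ [] := by
      simpa using Etour_ne_nil d
    have c0 : List.Chain' Adj3 ([] :: (Etour d).map (List.cons 0)) := by
      rw [List.Chain', List.isChain_cons]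
      refine ⟨?_, hm0⟩
      intro y hy
      rw [hhead0] at hy
      cases hy
      exact Or.inl ⟨0, rfl⟩
    have c1 : List.Chain' Adj3 ([] :: (Etour d).map (List.cons 1)) := by
      rw [List.Chain', List.isChain_cons]
      refine ⟨?_, hm1⟩
      intro y hy
      rw [hhead1] at hy
      cases hy
      exact Or.inl ⟨1, rfl⟩
    have l0 : ([] :: (Etour d).map (List.cons 0)).getLast? = some [0] := by
      rw [getLast?_cons_ne _ hne0, hlast0]
    have l1 : ([] :: (Etour d).map (List.cons 1)).getLast? = some [1] := by
      rw [getLast?_cons_ne _ hne1, hlast1]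
    have c01 : List.Chain' Adj3
        (([] :: (Etour d).map (List.cons 0)) ++ ([] :: (Etour d).map (List.cons 1))) := by
      refine List.IsChain.append c0 c1 ?_
      intro x hx y hy
      rw [l0] at hx
      cases hx
      rw [List.head?_cons] at hy
      cases hy
      exact Or.inr ⟨0, rfl⟩
    rw [Etour]
    refine List.IsChain.append c01 (List.isChain_singleton _) ?_
    intro x hx y hy
    rw [List.getLast?_append_of_ne_nil _ (List.cons_ne_nil _ _), l1] at hx
    cases hx
    rw [List.head?_cons] at hy
    cases hy
    exact Or.inr ⟨1, rfl⟩

lemma Etour_length (d : ℕ) : 2 ^ d ≤ (Etour d).length := by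
  induction d with
  | zero => simp [Etour]
  | succ d IH =>
    rw [Etour]
    simp only [List.length_append, List.length_cons, List.length_map]
    rw [pow_succ]
    simp only [List.length_singleton, List.length_nil]
    omega

lemma Etour_mem {d : ℕ} {p : List (Fin 3)} (hp : p ∈ Etour d) :
    p.length ≤ d ∧ ∀ x ∈ p, x ≠ (2 : Fin 3) := by
  induction d generalizing p with
  | zero =>
    rw [Etour] at hp
    rcases List.mem_singleton.mp hp with rfl
    simp
  | succ d IH =>
    rw [Etour] at hp
    rcases List.mem_append.mp hp with hp | hp
    · rcases List.mem_append.mp hp with hp | hp <;>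
      · rcases List.mem_cons.mp hp with rfl | hp
        · simp
        · obtain ⟨q, hq, rfl⟩ := List.mem_map.mp hp
          obtain ⟨h1, h2⟩ := IH hq
          refine ⟨by simpa using Nat.succ_le_succ h1, ?_⟩
          intro x hx
          rcases List.mem_cons.mp hx with rfl | hx
          · decide
          · exact h2 x hx
    · rcases List.mem_singleton.mp hp with rfl
      simp

lemma cnt_map_cons_ne {y : Fin 3} {x : Fin 3} (hxy : y ≠ x) (q : List (Fin 3))
    (L : List (List (Fin 3))) : cnt (x :: q) (L.map (List.cons y)) = 0 := by
  apply cnt_eq_zero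
  intro hmem
  obtain ⟨p', -, hp'⟩ := List.mem_map.mp hmem
  injection hp' with h1 h2
  exact hxy h1

lemma cons_inj3 (y : Fin 3) : Function.Injective (List.cons y) := fun a b h => by
  injection h

lemma Etour_count (d : ℕ) (p : List (Fin 3)) : cnt p (Etour d) ≤ 3 := by
  induction d generalizing p with
  | zero =>
    rw [Etour, cnt_cons, cnt_nil]
    split <;> omega
  | succ d IH =>
    rw [Etour, cnt_append, cnt_append, cnt_cons, cnt_cons, cnt_cons, cnt_nil]
    rcases p with _ | ⟨x, q⟩
    · have h0 : cnt ([] : List (Fin 3)) ((Etour d).map (List.cons 0)) = 0 :=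
        cnt_eq_zero (by
          intro hmem
          obtain ⟨q, -, hq⟩ := List.mem_map.mp hmem
          exact List.cons_ne_nil _ _ hq)
      have h1 : cnt ([] : List (Fin 3)) ((Etour d).map (List.cons 1)) = 0 :=
        cnt_eq_zero (by
          intro hmem
          obtain ⟨q, -, hq⟩ := List.mem_map.mp hmem
          exact List.cons_ne_nil _ _ hq)
      rw [h0, h1]
      simp
    · have hsum : cnt (x :: q) ((Etour d).map (List.cons 0))
          + cnt (x :: q) ((Etour d).map (List.cons 1)) ≤ cnt q (Etour d) := by
        by_cases h0 : x = 0
        · subst h0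
          rw [cnt_map_cons_ne (y := 1) (x := 0) (by decide) q]
          rw [show cnt ((0 : Fin 3) :: q) ((Etour d).map (List.cons 0))
              = cnt q (Etour d) from cnt_map_inj (cons_inj3 0) q (Etour d)]
          omega
        · by_cases h1 : x = 1
          · subst h1
            rw [cnt_map_cons_ne (y := 0) (x := 1) (by decide) q]
            rw [show cnt ((1 : Fin 3) :: q) ((Etour d).map (List.cons 1))
                = cnt q (Etour d) from cnt_map_inj (cons_inj3 1) q (Etour d)]
            omega
          · rw [cnt_map_cons_ne (Ne.symm h0) q, cnt_map_cons_ne (Ne.symm h1) q]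
            omega
      have := IH q
      have hne : ¬(([] : List (Fin 3)) = x :: q) := by simp
      simp only [if_neg hne]
      omega

end Comb
section Part4
open List

def seg (k : ℕ) : List (List (Fin 3)) :=
  (Etour k).map (fun p => List.replicate k 1 ++ 0 :: p) ++
    [List.replicate k 1, List.replicate (k+1) 1]

def bigP : ℕ → List (List (Fin 3))
  | 0 => [[]]
  | K+1 => bigP K ++ seg K

def nseg (j : ℕ) : List (List (Fin 3)) :=
  (Etour j).map (fun p => 2 :: (List.replicate j 1 ++ 0 :: p)) ++
    [2 :: List.replicate j 1, 2 :: List.replicate (j+1) 1]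

def bigN : ℕ → List (List (Fin 3))
  | 0 => [[2]]
  | K+1 => bigN K ++ nseg K

lemma fseg_inj (k : ℕ) :
    Function.Injective (fun p : List (Fin 3) => List.replicate k 1 ++ 0 :: p) := by
  intro a b h
  simp only [List.append_cancel_left_eq, List.cons.injEq, true_and] at h
  exact h

lemma fnseg_inj (j : ℕ) :
    Function.Injective (fun p : List (Fin 3) => (2 : Fin 3) :: (List.replicate j 1 ++ 0 :: p)) := by
  intro a b h
  simp only [List.cons.injEq, List.append_cancel_left_eq, true_and] at h
  exact h

lemma head?_append_left {α : Type*} {l₁ : List α} {a : α} (l₂ : List α)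
    (h : l₁.head? = some a) : (l₁ ++ l₂).head? = some a := by
  cases l₁ <;> simp_all

lemma seg_head (k : ℕ) : (seg k).head? = some (List.replicate k 1 ++ [0]) := by
  rw [seg]
  apply head?_append_left
  rw [List.head?_map, Etour_head]
  rfl

lemma seg_last (k : ℕ) : (seg k).getLast? = some (List.replicate (k+1) 1) := by
  rw [seg, List.getLast?_append_of_ne_nil _ (by simp)]
  rfl

lemma seg_chain (k : ℕ) : List.Chain' Adj3 (seg k) := by
  rw [seg]
  refine List.IsChain.append ?_ ?_ ?_
  · exact List.isChain_map_of_isChain _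
      (fun a b h => Adj3_append (List.replicate k 1) (Adj3_cons 0 h)) (Etour_chain k)
  · rw [List.isChain_pair]
    exact Or.inl ⟨1, List.replicate_succ'⟩
  · intro x hx y hy
    rw [List.getLast?_map, Etour_getLast] at hx
    cases hx
    rw [List.head?_cons] at hy
    cases hy
    exact Or.inr ⟨0, rfl⟩

lemma bigP_chain_last (K : ℕ) :
    List.Chain' Adj3 (bigP K) ∧ (bigP K).getLast? = some (List.replicate K 1) := by
  induction K with
  | zero => exact ⟨by simp [bigP, List.Chain'], rfl⟩
  | succ K IH =>
    constructor
    · refine List.IsChain.append IH.1 (seg_chain K) ?_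
      intro x hx y hy
      rw [IH.2] at hx
      cases hx
      rw [seg_head K] at hy
      cases hy
      exact Or.inl ⟨0, rfl⟩
    · rw [bigP, List.getLast?_append_of_ne_nil _ (by simp [seg]), seg_last]

lemma bigP_length (K : ℕ) : 2 ^ K ≤ (bigP K).length := by
  induction K with
  | zero => simp [bigP]
  | succ K IH =>
    have h := Etour_length K
    rw [bigP, List.length_append]
    have hseg : (Etour K).length + 2 = (seg K).length := by simp [seg]
    rw [pow_succ]
    omega

lemma seg_mem {k : ℕ} {u : List (Fin 3)} (h : u ∈ seg k) :
    u.length ≤ 2*k+1 ∧ ∀ x ∈ u, x ≠ (2 : Fin 3) := by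
  rw [seg] at h
  rcases List.mem_append.mp h with h | h
  · obtain ⟨p, hp, rfl⟩ := List.mem_map.mp h
    obtain ⟨h1, h2⟩ := Etour_mem hp
    constructor
    · simp only [List.length_append, List.length_replicate, List.length_cons]
      omega
    · intro x hx
      rcases List.mem_append.mp hx with hx | hx
      · rw [List.eq_of_mem_replicate hx]; decide
      · rcases List.mem_cons.mp hx with rfl | hx
        · decide
        · exact h2 x hx
  · rcases List.mem_cons.mp h with rfl | h
    · refine ⟨by simp; omega, ?_⟩
      intro x hx
      rw [List.eq_of_mem_replicate hx]; decide
    · rcases List.mem_cons.mp h with rfl | h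
      · refine ⟨by simp; omega, ?_⟩
        intro x hx
        rw [List.eq_of_mem_replicate hx]; decide
      · simp at h

lemma bigP_mem {K : ℕ} {u : List (Fin 3)} (h : u ∈ bigP K) :
    u.length ≤ 2*K+1 ∧ ∀ x ∈ u, x ≠ (2 : Fin 3) := by
  induction K with
  | zero =>
    rw [bigP] at h
    rcases List.mem_singleton.mp h with rfl
    simp
  | succ K IH =>
    rw [bigP] at h
    rcases List.mem_append.mp h with h | h
    · obtain ⟨h1, h2⟩ := IH h
      exact ⟨by omega, h2⟩
    · obtain ⟨h1, h2⟩ := seg_mem h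
      exact ⟨by omega, h2⟩

lemma nseg_head (j : ℕ) : (nseg j).head? = some (2 :: (List.replicate j 1 ++ [0])) := by
  rw [nseg]
  apply head?_append_left
  rw [List.head?_map, Etour_head]
  rfl

lemma nseg_last (j : ℕ) : (nseg j).getLast? = some (2 :: List.replicate (j+1) 1) := by
  rw [nseg, List.getLast?_append_of_ne_nil _ (by simp)]
  rfl

lemma nseg_chain (j : ℕ) : List.Chain' Adj3 (nseg j) := by
  rw [nseg]
  refine List.IsChain.append ?_ ?_ ?_
  · exact List.isChain_map_of_isChain _
      (fun a b h => Adj3_cons 2 (Adj3_append (List.replicate j 1) (Adj3_cons 0 h)))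
      (Etour_chain j)
  · rw [List.isChain_pair]
    exact Or.inl ⟨1, by rw [List.replicate_succ']; rfl⟩
  · intro x hx y hy
    rw [List.getLast?_map, Etour_getLast] at hx
    cases hx
    rw [List.head?_cons] at hy
    cases hy
    exact Or.inr ⟨0, rfl⟩

lemma bigN_chain_last (K : ℕ) :
    List.Chain' Adj3 (bigN K) ∧ (bigN K).getLast? = some (2 :: List.replicate K 1) := by
  induction K with
  | zero => exact ⟨by simp [bigN, List.Chain'], rfl⟩
  | succ K IH =>
    constructor
    · refine List.IsChain.append IH.1 (nseg_chain K) ?_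
      intro x hx y hy
      rw [IH.2] at hx
      cases hx
      rw [nseg_head K] at hy
      cases hy
      exact Or.inl ⟨0, rfl⟩
    · rw [bigN, List.getLast?_append_of_ne_nil _ (by simp [nseg]), nseg_last]

lemma bigN_length (K : ℕ) : 2 ^ K ≤ (bigN K).length := by
  induction K with
  | zero => simp [bigN]
  | succ K IH =>
    have h := Etour_length K
    rw [bigN, List.length_append]
    have hseg : (Etour K).length + 2 = (nseg K).length := by simp [nseg]
    rw [pow_succ]
    omega

lemma nseg_mem {j : ℕ} {u : List (Fin 3)} (h : u ∈ nseg j) :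
    ∃ w, u = 2 :: w ∧ w.length ≤ 2*j+1 ∧ ∀ x ∈ w, x ≠ (2 : Fin 3) := by
  rw [nseg] at h
  rcases List.mem_append.mp h with h | h
  · obtain ⟨p, hp, rfl⟩ := List.mem_map.mp h
    obtain ⟨h1, h2⟩ := Etour_mem hp
    refine ⟨_, rfl, ?_, ?_⟩
    · simp only [List.length_append, List.length_replicate, List.length_cons]
      omega
    · intro x hx
      rcases List.mem_append.mp hx with hx | hx
      · rw [List.eq_of_mem_replicate hx]; decide
      · rcases List.mem_cons.mp hx with rfl | hx
        · decide
        · exact h2 x hx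
  · rcases List.mem_cons.mp h with rfl | h
    · refine ⟨_, rfl, by simp; omega, ?_⟩
      intro x hx
      rw [List.eq_of_mem_replicate hx]; decide
    · rcases List.mem_cons.mp h with rfl | h
      · refine ⟨_, rfl, by simp; omega, ?_⟩
        intro x hx
        rw [List.eq_of_mem_replicate hx]; decide
      · simp at h

lemma bigN_mem {K : ℕ} {u : List (Fin 3)} (h : u ∈ bigN K) :
    ∃ w, u = 2 :: w ∧ w.length ≤ 2*K+1 ∧ ∀ x ∈ w, x ≠ (2 : Fin 3) := by
  induction K with
  | zero =>
    rw [bigN] at h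
    rcases List.mem_singleton.mp h with rfl
    exact ⟨[], rfl, by simp, by simp⟩
  | succ K IH =>
    rw [bigN] at h
    rcases List.mem_append.mp h with h | h
    · obtain ⟨w, rfl, h1, h2⟩ := IH h
      exact ⟨w, rfl, by omega, h2⟩
    · obtain ⟨w, rfl, h1, h2⟩ := nseg_mem h
      exact ⟨w, rfl, by omega, h2⟩

end Part4
section Part5
open List

lemma zero_ne_one3 : (0 : Fin 3) ≠ 1 := by decide
lemma two_ne_one3 : (2 : Fin 3) ≠ 1 := by decide

lemma rep_eq_rep_iff (k m : ℕ) :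
    (List.replicate k (1 : Fin 3) = List.replicate m 1) ↔ k = m := by
  constructor
  · intro h
    have := congrArg List.length h
    simpa using this
  · rintro rfl; rfl

lemma zero_not_mem_rep (m : ℕ) : (0 : Fin 3) ∉ List.replicate m (1 : Fin 3) := by
  intro h
  exact zero_ne_one3 (List.eq_of_mem_replicate h)

lemma two_not_mem_rep (m : ℕ) : (2 : Fin 3) ∉ List.replicate m (1 : Fin 3) := by
  intro h
  exact two_ne_one3 (List.eq_of_mem_replicate h)

lemma rep_zero_uniq : ∀ (k : ℕ) {j : ℕ} {p q : List (Fin 3)},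
    List.replicate k (1 : Fin 3) ++ 0 :: p = List.replicate j 1 ++ 0 :: q →
    k = j ∧ p = q := by
  intro k
  induction k with
  | zero =>
    intro j p q h
    cases j with
    | zero => simpa using h
    | succ j =>
      rw [List.replicate_succ] at h
      simp at h
  | succ k IH =>
    intro j p q h
    cases j with
    | zero =>
      rw [List.replicate_succ] at h
      simp at h
    | succ j =>
      rw [List.replicate_succ, List.replicate_succ] at h
      simp only [List.cons_append, List.cons.injEq, true_and] at h
      obtain ⟨h1, h2⟩ := IH h
      exact ⟨by omega, h2⟩

lemma seg_cnt_rep (m k : ℕ) :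
    cnt (List.replicate m (1 : Fin 3)) (seg k) ≤
      (if k = m then 1 else 0) + (if k + 1 = m then 1 else 0) := by
  rw [seg, cnt_append, cnt_cons, cnt_cons, cnt_nil]
  have hmap : cnt (List.replicate m (1 : Fin 3))
      ((Etour k).map (fun p => List.replicate k 1 ++ 0 :: p)) = 0 := by
    apply cnt_eq_zero
    intro hmem
    obtain ⟨p, -, hp⟩ := List.mem_map.mp hmem
    apply zero_not_mem_rep m
    rw [← hp]
    exact List.mem_append_right _ (List.mem_cons_self)
  rw [hmap]
  simp only [rep_eq_rep_iff]
  omega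

lemma seg_cnt_zero (j k : ℕ) (q : List (Fin 3)) :
    cnt (List.replicate j (1 : Fin 3) ++ 0 :: q) (seg k) =
      if k = j then cnt q (Etour k) else 0 := by
  rw [seg, cnt_append, cnt_cons, cnt_cons, cnt_nil]
  have h1 : ¬(List.replicate k (1 : Fin 3) = List.replicate j 1 ++ 0 :: q) := by
    intro h
    apply zero_not_mem_rep k
    rw [h]
    exact List.mem_append_right _ (List.mem_cons_self)
  have h2 : ¬(List.replicate (k+1) (1 : Fin 3) = List.replicate j 1 ++ 0 :: q) := by
    intro h
    apply zero_not_mem_rep (k+1)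
    rw [h]
    exact List.mem_append_right _ (List.mem_cons_self)
  rw [if_neg h1, if_neg h2]
  by_cases hkj : k = j
  · subst hkj
    rw [if_pos rfl]
    have := cnt_map_inj (fseg_inj k) q (Etour k)
    simpa using this
  · rw [if_neg hkj]
    have : cnt (List.replicate j (1 : Fin 3) ++ 0 :: q)
        ((Etour k).map (fun p => List.replicate k 1 ++ 0 :: p)) = 0 := by
      apply cnt_eq_zero
      intro hmem
      obtain ⟨p, -, hp⟩ := List.mem_map.mp hmem
      exact hkj (rep_zero_uniq k hp).1
    omega

lemma seg_cnt_two (k : ℕ) {t : List (Fin 3)} (h2 : (2 : Fin 3) ∈ t) : cnt t (seg k) = 0 := by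
  apply cnt_eq_zero
  intro hmem
  exact (seg_mem hmem).2 2 h2 rfl

lemma nseg_cnt_rep (m j : ℕ) :
    cnt ((2 : Fin 3) :: List.replicate m (1 : Fin 3)) (nseg j) ≤
      (if j = m then 1 else 0) + (if j + 1 = m then 1 else 0) := by
  rw [nseg, cnt_append, cnt_cons, cnt_cons, cnt_nil]
  have hmap : cnt ((2 : Fin 3) :: List.replicate m (1 : Fin 3))
      ((Etour j).map (fun p => (2:Fin 3) :: (List.replicate j 1 ++ 0 :: p))) = 0 := by
    apply cnt_eq_zero
    intro hmem
    obtain ⟨p, -, hp⟩ := List.mem_map.mp hmem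
    apply zero_not_mem_rep m
    have : List.replicate j (1:Fin 3) ++ 0 :: p = List.replicate m 1 := by
      injection hp
    rw [← this]
    exact List.mem_append_right _ (List.mem_cons_self)
  rw [hmap]
  simp only [List.cons.injEq, rep_eq_rep_iff, true_and]
  omega

lemma nseg_cnt_zero (m j : ℕ) (q : List (Fin 3)) :
    cnt ((2 : Fin 3) :: (List.replicate m (1 : Fin 3) ++ 0 :: q)) (nseg j) =
      if j = m then cnt q (Etour j) else 0 := by
  rw [nseg, cnt_append, cnt_cons, cnt_cons, cnt_nil]
  have h1 : ¬((2:Fin 3) :: List.replicate j (1 : Fin 3)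
      = 2 :: (List.replicate m 1 ++ 0 :: q)) := by
    intro h
    apply zero_not_mem_rep j
    have : List.replicate j (1:Fin 3) = List.replicate m 1 ++ 0 :: q := by injection h
    rw [this]
    exact List.mem_append_right _ (List.mem_cons_self)
  have h2 : ¬((2:Fin 3) :: List.replicate (j+1) (1 : Fin 3)
      = 2 :: (List.replicate m 1 ++ 0 :: q)) := by
    intro h
    apply zero_not_mem_rep (j+1)
    have : List.replicate (j+1) (1:Fin 3) = List.replicate m 1 ++ 0 :: q := by injection h
    rw [this]
    exact List.mem_append_right _ (List.mem_cons_self)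
  rw [if_neg h1, if_neg h2]
  by_cases hjm : j = m
  · subst hjm
    rw [if_pos rfl]
    have := cnt_map_inj (fnseg_inj j) q (Etour j)
    simpa using this
  · rw [if_neg hjm]
    have : cnt ((2:Fin 3) :: (List.replicate m (1 : Fin 3) ++ 0 :: q))
        ((Etour j).map (fun p => (2:Fin 3) :: (List.replicate j 1 ++ 0 :: p))) = 0 := by
      apply cnt_eq_zero
      intro hmem
      obtain ⟨p, -, hp⟩ := List.mem_map.mp hmem
      have : List.replicate j (1:Fin 3) ++ 0 :: p = List.replicate m 1 ++ 0 :: q := by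
        injection hp
      exact hjm (rep_zero_uniq j this).1
    omega

lemma nseg_cnt_tail_two (j : ℕ) {w : List (Fin 3)} (h2 : (2 : Fin 3) ∈ w) :
    cnt ((2 : Fin 3) :: w) (nseg j) = 0 := by
  apply cnt_eq_zero
  intro hmem
  obtain ⟨w', hw', -, hall⟩ := nseg_mem hmem
  have : w = w' := by injection hw'
  exact hall 2 (this ▸ h2) rfl

lemma bigP_cnt (t : List (Fin 3)) (K : ℕ) :
    cnt t (bigP K) = (if ([] : List (Fin 3)) = t then 1 else 0)
      + ∑ k ∈ Finset.range K, cnt t (seg k) := by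
  induction K with
  | zero =>
    rw [bigP, cnt_cons, cnt_nil]
    simp
  | succ K IH =>
    rw [bigP, cnt_append, IH, Finset.sum_range_succ]
    omega

lemma bigN_cnt (t : List (Fin 3)) (K : ℕ) :
    cnt t (bigN K) = (if ([2] : List (Fin 3)) = t then 1 else 0)
      + ∑ j ∈ Finset.range K, cnt t (nseg j) := by
  induction K with
  | zero =>
    rw [bigN, cnt_cons, cnt_nil]
    simp
  | succ K IH =>
    rw [bigN, cnt_append, IH, Finset.sum_range_succ]
    omega

lemma sum_ind1 (K m : ℕ) : (∑ k ∈ Finset.range K, if k = m then 1 else 0) ≤ 1 := by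
  rw [Finset.sum_ite_eq' (Finset.range K) m (fun _ => 1)]
  split <;> omega

lemma sum_ind2 (K m : ℕ) : (∑ k ∈ Finset.range K, if k + 1 = m then 1 else 0) ≤ 1 := by
  cases m with
  | zero => simp
  | succ m =>
    have : ∀ k, (if k + 1 = m + 1 then (1:ℕ) else 0) = if k = m then 1 else 0 := by
      intro k
      by_cases h : k = m
      · subst h; simp
      · rw [if_neg (by omega), if_neg h]
    simp only [this]
    exact sum_ind1 K m

lemma fin3_cases (x : Fin 3) : x = 0 ∨ x = 1 ∨ x = 2 := by revert x; decide

lemma decomp3 (t : List (Fin 3)) :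
    (∃ m, t = List.replicate m 1) ∨ (∃ j q, t = List.replicate j 1 ++ 0 :: q) ∨
      (∃ j q, t = List.replicate j 1 ++ 2 :: q) := by
  induction t with
  | nil => exact Or.inl ⟨0, rfl⟩
  | cons x u IH =>
    rcases fin3_cases x with rfl | rfl | rfl
    · exact Or.inr (Or.inl ⟨0, u, rfl⟩)
    · rcases IH with ⟨m, rfl⟩ | ⟨j, q, rfl⟩ | ⟨j, q, rfl⟩
      · exact Or.inl ⟨m + 1, by rw [List.replicate_succ]⟩
      · exact Or.inr (Or.inl ⟨j + 1, q, by rw [List.replicate_succ]; rfl⟩)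
      · exact Or.inr (Or.inr ⟨j + 1, q, by rw [List.replicate_succ]; rfl⟩)
    · exact Or.inr (Or.inr ⟨0, u, rfl⟩)

lemma total_cnt (t : List (Fin 3)) (K K' : ℕ) :
    cnt t (bigP K) + cnt t (bigN K') ≤ 3 := by
  rw [bigP_cnt, bigN_cnt]
  rcases decomp3 t with ⟨m, rfl⟩ | ⟨j, q, rfl⟩ | ⟨j, q, rfl⟩
  · -- t = replicate m 1
    have hN0 : ¬(([2] : List (Fin 3)) = List.replicate m 1) := by
      intro h
      apply two_not_mem_rep m
      rw [← h]
      exact List.mem_singleton_self _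
    have hNseg : ∀ j ∈ Finset.range K', cnt (List.replicate m (1:Fin 3)) (nseg j) = 0 := by
      intro j _
      apply cnt_eq_zero
      intro hmem
      obtain ⟨w, hw, -, -⟩ := nseg_mem hmem
      apply two_not_mem_rep m
      rw [hw]
      exact List.mem_cons_self
    rw [if_neg hN0, Finset.sum_eq_zero hNseg]
    have hPsum : (∑ k ∈ Finset.range K, cnt (List.replicate m (1:Fin 3)) (seg k)) ≤
        (∑ k ∈ Finset.range K, if k = m then 1 else 0)
          + (∑ k ∈ Finset.range K, if k + 1 = m then 1 else 0) := by
      rw [← Finset.sum_add_distrib]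
      exact Finset.sum_le_sum (fun k _ => seg_cnt_rep m k)
    have h1 := sum_ind1 K m
    have h2 := sum_ind2 K m
    have hif : (if ([] : List (Fin 3)) = List.replicate m 1 then 1 else 0) ≤ 1 := by
      split <;> omega
    omega
  · -- t = replicate j 1 ++ 0 :: q
    have hP0 : ¬(([] : List (Fin 3)) = List.replicate j 1 ++ 0 :: q) := by
      intro h
      exact List.cons_ne_nil _ _ (List.append_eq_nil_iff.mp h.symm).2
    have hN0 : ¬(([2] : List (Fin 3)) = List.replicate j 1 ++ 0 :: q) := by
      cases j with
      | zero => intro h; simp at h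
      | succ j =>
        rw [List.replicate_succ]
        intro h
        simp at h
    have hNseg : ∀ i ∈ Finset.range K',
        cnt (List.replicate j (1:Fin 3) ++ 0 :: q) (nseg i) = 0 := by
      intro i _
      apply cnt_eq_zero
      intro hmem
      obtain ⟨w, hw, -, -⟩ := nseg_mem hmem
      cases j with
      | zero => simp at hw
      | succ j =>
        rw [List.replicate_succ] at hw
        simp at hw
    rw [if_neg hP0, if_neg hN0, Finset.sum_eq_zero hNseg]
    have hPsum : (∑ k ∈ Finset.range K, cnt (List.replicate j (1:Fin 3) ++ 0 :: q) (seg k))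
        = if j ∈ Finset.range K then cnt q (Etour j) else 0 := by
      rw [← Finset.sum_ite_eq' (Finset.range K) j (fun k => cnt q (Etour k))]
      apply Finset.sum_congr rfl
      intro k _
      exact seg_cnt_zero j k q
    have hE := Etour_count j q
    rw [hPsum]
    split <;> omega
  · -- t = replicate j 1 ++ 2 :: q
    have h2mem : (2 : Fin 3) ∈ List.replicate j (1:Fin 3) ++ 2 :: q :=
      List.mem_append_right _ (List.mem_cons_self)
    have hPseg : ∀ k ∈ Finset.range K,
        cnt (List.replicate j (1:Fin 3) ++ 2 :: q) (seg k) = 0 :=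
      fun k _ => seg_cnt_two k h2mem
    have hP0 : ¬(([] : List (Fin 3)) = List.replicate j 1 ++ 2 :: q) := by
      intro h
      exact List.cons_ne_nil _ _ (List.append_eq_nil_iff.mp h.symm).2
    rw [if_neg hP0, Finset.sum_eq_zero hPseg]
    cases j with
    | succ j =>
      have hN0 : ¬(([2] : List (Fin 3)) = List.replicate (j+1) 1 ++ 2 :: q) := by
        rw [List.replicate_succ]
        intro h
        simp at h
      have hNseg : ∀ i ∈ Finset.range K',
          cnt (List.replicate (j+1) (1:Fin 3) ++ 2 :: q) (nseg i) = 0 := by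
        intro i _
        apply cnt_eq_zero
        intro hmem
        obtain ⟨w, hw, -, -⟩ := nseg_mem hmem
        rw [List.replicate_succ] at hw
        simp at hw
      rw [if_neg hN0, Finset.sum_eq_zero hNseg]
      omega
    | zero =>
      simp only [List.replicate_zero, List.nil_append]
      rcases decomp3 q with ⟨m, rfl⟩ | ⟨m, p, rfl⟩ | ⟨m, p, rfl⟩
      · have hsum : (∑ i ∈ Finset.range K', cnt ((2:Fin 3) :: List.replicate m 1) (nseg i)) ≤
            (∑ i ∈ Finset.range K', if i = m then 1 else 0)
              + (∑ i ∈ Finset.range K', if i + 1 = m then 1 else 0) := by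
          rw [← Finset.sum_add_distrib]
          exact Finset.sum_le_sum (fun i _ => nseg_cnt_rep m i)
        have h1 := sum_ind1 K' m
        have h2 := sum_ind2 K' m
        have hif : (if ([2] : List (Fin 3)) = 2 :: List.replicate m 1 then 1 else 0) ≤ 1 := by
          split <;> omega
        omega
      · have hN0 : ¬(([2] : List (Fin 3)) = 2 :: (List.replicate m 1 ++ 0 :: p)) := by
          intro h
          have : ([] : List (Fin 3)) = List.replicate m 1 ++ 0 :: p := by injection h
          exact List.cons_ne_nil _ _ (List.append_eq_nil_iff.mp this.symm).2
        have hsum : (∑ i ∈ Finset.range K',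
            cnt ((2:Fin 3) :: (List.replicate m 1 ++ 0 :: p)) (nseg i))
            = if m ∈ Finset.range K' then cnt p (Etour m) else 0 := by
          rw [← Finset.sum_ite_eq' (Finset.range K') m (fun i => cnt p (Etour i))]
          apply Finset.sum_congr rfl
          intro i _
          exact nseg_cnt_zero m i p
        have hE := Etour_count m p
        rw [if_neg hN0, hsum]
        split <;> omega
      · have h2q : (2:Fin 3) ∈ List.replicate m (1:Fin 3) ++ 2 :: p :=
          List.mem_append_right _ (List.mem_cons_self)
        have hNseg : ∀ i ∈ Finset.range K',
            cnt ((2:Fin 3) :: (List.replicate m 1 ++ 2 :: p)) (nseg i) = 0 :=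
          fun i _ => nseg_cnt_tail_two i h2q
        have hN0 : ¬(([2] : List (Fin 3)) = 2 :: (List.replicate m 1 ++ 2 :: p)) := by
          intro h
          have : ([] : List (Fin 3)) = List.replicate m 1 ++ 2 :: p := by injection h
          exact List.cons_ne_nil _ _ (List.append_eq_nil_iff.mp this.symm).2
        rw [if_neg hN0, Finset.sum_eq_zero hNseg]
        omega

end Part5
section Part6
open List

def wp (n : ℕ) : List (Fin 3) := (bigP (n+1)).getD n []
def wn (n : ℕ) : List (Fin 3) := (bigN (n+1)).getD n []

lemma bigP_length_mono {K K' : ℕ} (h : K ≤ K') : (bigP K).length ≤ (bigP K').length := by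
  induction K' with
  | zero =>
    have hK0 : K = 0 := Nat.le_zero.mp h
    subst hK0
    exact le_refl _
  | succ K' IH =>
    rcases Nat.lt_or_ge K (K'+1) with hlt | hge
    · have := IH (by omega)
      rw [bigP, List.length_append]
      omega
    · have : K = K' + 1 := by omega
      subst this
      exact le_refl _

lemma bigN_length_mono {K K' : ℕ} (h : K ≤ K') : (bigN K).length ≤ (bigN K').length := by
  induction K' with
  | zero =>
    have hK0 : K = 0 := Nat.le_zero.mp h
    subst hK0
    exact le_refl _
  | succ K' IH =>
    rcases Nat.lt_or_ge K (K'+1) with hlt | hge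
    · have := IH (by omega)
      rw [bigN, List.length_append]
      omega
    · have : K = K' + 1 := by omega
      subst this
      exact le_refl _

lemma bigP_prefix_getD {K n : ℕ} (h : n < (bigP K).length) {K' : ℕ} (hK : K ≤ K') :
    (bigP K').getD n [] = (bigP K).getD n [] := by
  induction K' with
  | zero =>
    have hK0 : K = 0 := Nat.le_zero.mp hK
    subst hK0
    rfl
  | succ K' IH =>
    rcases Nat.lt_or_ge K (K'+1) with hlt | hge
    · have hK' : K ≤ K' := by omega
      rw [bigP, List.getD_append _ _ _ _ (h.trans_le (bigP_length_mono hK'))]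
      exact IH hK'
    · have : K = K' + 1 := by omega
      subst this
      rfl

lemma bigN_prefix_getD {K n : ℕ} (h : n < (bigN K).length) {K' : ℕ} (hK : K ≤ K') :
    (bigN K').getD n [] = (bigN K).getD n [] := by
  induction K' with
  | zero =>
    have hK0 : K = 0 := Nat.le_zero.mp hK
    subst hK0
    rfl
  | succ K' IH =>
    rcases Nat.lt_or_ge K (K'+1) with hlt | hge
    · have hK' : K ≤ K' := by omega
      rw [bigN, List.getD_append _ _ _ _ (h.trans_le (bigN_length_mono hK'))]
      exact IH hK'
    · have : K = K' + 1 := by omega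
      subst this
      rfl

lemma n_lt_bigP (n : ℕ) : n < (bigP (n+1)).length := by
  have h1 : n < 2 ^ (n+1) := by
    have := Nat.lt_two_pow_self (n := n)
    have : (2:ℕ) ^ n ≤ 2 ^ (n+1) := Nat.pow_le_pow_right (by omega) (by omega)
    omega
  exact h1.trans_le (bigP_length (n+1))

lemma n_lt_bigN (n : ℕ) : n < (bigN (n+1)).length := by
  have h1 : n < 2 ^ (n+1) := by
    have := Nat.lt_two_pow_self (n := n)
    have : (2:ℕ) ^ n ≤ 2 ^ (n+1) := Nat.pow_le_pow_right (by omega) (by omega)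
    omega
  exact h1.trans_le (bigN_length (n+1))

lemma wp_eq {n K : ℕ} (h : n < (bigP K).length) : wp n = (bigP K).getD n [] := by
  rcases le_total (n+1) K with hK | hK
  · exact (bigP_prefix_getD (n_lt_bigP n) hK).symm
  · exact bigP_prefix_getD h hK

lemma wn_eq {n K : ℕ} (h : n < (bigN K).length) : wn n = (bigN K).getD n [] := by
  rcases le_total (n+1) K with hK | hK
  · exact (bigN_prefix_getD (n_lt_bigN n) hK).symm
  · exact bigN_prefix_getD h hK

lemma wp_mem (n : ℕ) : wp n ∈ bigP (n+1) := by
  rw [wp, List.getD_eq_getElem _ _ (n_lt_bigP n)]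
  exact List.getElem_mem _

lemma wn_mem (n : ℕ) : wn n ∈ bigN (n+1) := by
  rw [wn, List.getD_eq_getElem _ _ (n_lt_bigN n)]
  exact List.getElem_mem _

lemma wp_adj (n : ℕ) : Adj3 (wp n) (wp (n+1)) := by
  have h2 : n + 1 < (bigP (n+2)).length := n_lt_bigP (n+1)
  have h1 : n < (bigP (n+2)).length := by omega
  rw [wp_eq h1, wp_eq h2]
  have hch := (bigP_chain_last (n+2)).1
  rw [List.Chain', List.isChain_iff_getElem] at hch
  have hc := hch n (by omega)
  rw [List.getD_eq_getElem _ _ h1, List.getD_eq_getElem _ _ h2]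
  simpa using hc

lemma wn_adj (n : ℕ) : Adj3 (wn n) (wn (n+1)) := by
  have h2 : n + 1 < (bigN (n+2)).length := n_lt_bigN (n+1)
  have h1 : n < (bigN (n+2)).length := by omega
  rw [wn_eq h1, wn_eq h2]
  have hch := (bigN_chain_last (n+2)).1
  rw [List.Chain', List.isChain_iff_getElem] at hch
  have hc := hch n (by omega)
  rw [List.getD_eq_getElem _ _ h1, List.getD_eq_getElem _ _ h2]
  simpa using hc

lemma wp_len (n : ℕ) : (wp n).length ≤ 2 * (Nat.log 2 (n+1) + 1) + 1 := by
  have hlt : n < 2 ^ (Nat.log 2 (n+1) + 1) := by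
    have h := Nat.lt_pow_succ_log_self (b := 2) (by omega) (n+1)
    rw [Nat.succ_eq_add_one] at h
    omega
  set K := Nat.log 2 (n+1) + 1 with hKdef
  have h : n < (bigP K).length := hlt.trans_le (bigP_length K)
  have hmem : wp n ∈ bigP K := by
    rw [wp_eq h, List.getD_eq_getElem _ _ h]
    exact List.getElem_mem _
  exact (bigP_mem hmem).1

lemma wn_len (n : ℕ) : (wn n).length ≤ 2 * (Nat.log 2 (n+1) + 1) + 2 := by
  have hlt : n < 2 ^ (Nat.log 2 (n+1) + 1) := by
    have h := Nat.lt_pow_succ_log_self (b := 2) (by omega) (n+1)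
    rw [Nat.succ_eq_add_one] at h
    omega
  set K := Nat.log 2 (n+1) + 1 with hKdef
  have h : n < (bigN K).length := hlt.trans_le (bigN_length K)
  have hmem : wn n ∈ bigN K := by
    rw [wn_eq h, List.getD_eq_getElem _ _ h]
    exact List.getElem_mem _
  obtain ⟨w, hw, h1, -⟩ := bigN_mem hmem
  rw [hw]
  simp only [List.length_cons]
  omega

lemma wp0 : wp 0 = [] := rfl

lemma wn0 : wn 0 = [2] := rfl

lemma card_le_cnt (L : List (List (Fin 3))) (t : List (Fin 3)) (s : Finset ℕ)
    (h : ∀ i ∈ s, i < L.length ∧ L.getD i [] = t) : s.card ≤ cnt t L := by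
  induction L generalizing s with
  | nil =>
    have hs : s = ∅ := Finset.eq_empty_of_forall_notMem (fun i hi => by
      have := (h i hi).1
      simp at this)
    rw [hs]
    simp [cnt_nil]
  | cons a L IH =>
    classical
    set s' := (s.erase 0).image (· - 1) with hs'def
    have hs' : ∀ j ∈ s', j < L.length ∧ L.getD j [] = t := by
      intro j hj
      obtain ⟨i, hi, rfl⟩ := Finset.mem_image.mp hj
      have hi0 : i ≠ 0 := (Finset.mem_erase.mp hi).1
      have his : i ∈ s := (Finset.mem_erase.mp hi).2
      obtain ⟨h1, h2⟩ := h i his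
      obtain ⟨i', rfl⟩ : ∃ i', i = i' + 1 := ⟨i - 1, by omega⟩
      simp only [Nat.add_sub_cancel]
      constructor
      · simp only [List.length_cons] at h1
        omega
      · simpa [List.getD_cons_succ] using h2
    have hcard' : s'.card = (s.erase 0).card := Finset.card_image_of_injOn (by
      intro i hi j hj hij
      have hi0 : i ≠ 0 := (Finset.mem_erase.mp hi).1
      have hj0 : j ≠ 0 := (Finset.mem_erase.mp hj).1
      simp only at hij
      omega)
    have hIH := IH s' hs'
    rw [cnt_cons]
    by_cases h0 : 0 ∈ s
    · have ha : a = t := by simpa [List.getD_cons_zero] using (h 0 h0).2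
      rw [if_pos ha]
      have hc : s.card = (s.erase 0).card + 1 := by
        rw [Finset.card_erase_of_mem h0]
        have := Finset.card_pos.mpr ⟨0, h0⟩
        omega
      omega
    · have he : s.erase 0 = s := Finset.erase_eq_of_notMem h0
      rw [he] at hcard'
      omega

end Part6

lemma Adj3_symm {a b : List (Fin 3)} (h : Adj3 a b) : Adj3 b a := by
  rcases h with h | h
  · exact Or.inr h
  · exact Or.inl h

lemma ValidL_of_no2 {u : List (Fin 3)} (h : ∀ x ∈ u, x ≠ (2 : Fin 3)) : ValidL u :=
  fun x hx => h x (List.mem_of_mem_drop hx)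

lemma wp_valid (n : ℕ) : ValidL (wp n) := ValidL_of_no2 (bigP_mem (wp_mem n)).2

lemma wn_valid (n : ℕ) : ValidL (wn n) := by
  obtain ⟨w, hw, -, hall⟩ := bigN_mem (wn_mem n)
  intro x hx
  rw [hw] at hx
  exact hall x (by simpa using hx)

end LogWalk

/-- There is a 1-Lipschitz (with respect to `|a − b|`) map `W : ℤ → T₃`
with at most 3 preimages per vertex, satisfying `d(W 0, W b) ≤ C·log(1 + |b|) + C`. -/
theorem exists_log_distorted_walk_Z_to_T3
    (T : Type*) [MetricSpace T] (hT : IsCubicTreeMetric T) :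
    ∃ (W : ℤ → T) (C : ℝ),
      (∀ a b : ℤ, dist (W a) (W b) ≤ |(a : ℝ) - (b : ℝ)|) ∧
      (∀ t : T, ∀ s : Finset ℤ, (∀ a ∈ s, W a = t) → s.card ≤ 3) ∧
      ∀ b : ℤ, dist (W 0) (W b) ≤ C * Real.log (1 + |(b : ℝ)|) + C := by

  classical
  obtain ⟨G, hconn, hacyc, hdeg, hdist⟩ := hT
  obtain ⟨r⟩ : Nonempty T := hconn.nonempty
  choose enum hinj hadj using fun v : T => LogWalk.exists_enum (G := G) v (hdeg v)
  set wfun : ℤ → List (Fin 3) := fun b =>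
    if 0 ≤ b then LogWalk.wp b.toNat else LogWalk.wn (b.natAbs - 1) with hwfun
  set W : ℤ → T := fun b => LogWalk.psi enum r (wfun b) with hWdef
  -- validity of all walk lists
  have hvalid : ∀ b : ℤ, LogWalk.ValidL (wfun b) := by
    intro b
    rw [hwfun]
    by_cases h0 : 0 ≤ b
    · simp only [if_pos h0]
      exact LogWalk.wp_valid _
    · simp only [if_neg h0]
      exact LogWalk.wn_valid _
  -- consecutive adjacency of the combinatorial walk
  have hstep3 : ∀ b : ℤ, LogWalk.Adj3 (wfun b) (wfun (b + 1)) := by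
    intro b
    rw [hwfun]
    by_cases h0 : 0 ≤ b
    · simp only [if_pos h0, if_pos (by omega : (0:ℤ) ≤ b + 1)]
      rw [show (b + 1).toNat = b.toNat + 1 from by omega]
      exact LogWalk.wp_adj _
    · by_cases h1 : 0 ≤ b + 1
      · -- b = -1
        have hb : b = -1 := by omega
        subst hb
        simp only [if_neg h0, if_pos h1]
        rw [show ((-1 : ℤ).natAbs - 1) = 0 from by omega,
          show ((-1 : ℤ) + 1).toNat = 0 from by omega, LogWalk.wp0, LogWalk.wn0]
        exact Or.inr ⟨2, rfl⟩
      · simp only [if_neg h0, if_neg h1]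
        rw [show b.natAbs - 1 = ((b+1).natAbs - 1) + 1 from by omega]
        exact LogWalk.Adj3_symm (LogWalk.wn_adj _)
  -- adjacency transfers to distance ≤ 1
  have hadjdist : ∀ t t' : List (Fin 3), LogWalk.Adj3 t t' →
      dist (LogWalk.psi enum r t) (LogWalk.psi enum r t') ≤ 1 := by
    have key : ∀ (s : List (Fin 3)) (x : Fin 3),
        dist (LogWalk.psi enum r s) (LogWalk.psi enum r (s ++ [x])) ≤ 1 := by
      intro s x
      have hA : G.Adj (LogWalk.psi enum r s) (LogWalk.psi enum r (s ++ [x])) :=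
        LogWalk.psi_adj_snoc enum hinj hadj r s x
      rw [hdist, SimpleGraph.dist_eq_one_iff_adj.mpr hA]
      norm_num
    intro t t' h
    rcases h with ⟨x, rfl⟩ | ⟨x, rfl⟩
    · exact key t x
    · rw [dist_comm]
      exact key t' x
  have hstep : ∀ b : ℤ, dist (W b) (W (b + 1)) ≤ 1 := fun b =>
    hadjdist _ _ (hstep3 b)
  -- W 0 = r
  have hW0 : W 0 = r := by
    have h1 : wfun 0 = [] := by
      rw [hwfun]
      simp only [if_pos (le_refl (0:ℤ))]
      rw [show (0:ℤ).toNat = 0 from rfl, LogWalk.wp0]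
    rw [hWdef]
    simp only [h1]
    exact LogWalk.psi_nil enum r
  refine ⟨W, 4, ?_, ?_, ?_⟩
  · -- Lipschitz
    have hsegN : ∀ (k : ℕ) (a : ℤ), dist (W a) (W (a + k)) ≤ (k : ℝ) := by
      intro k
      induction k with
      | zero => intro a; simp
      | succ k IH =>
        intro a
        have h1 := IH a
        have h2 := hstep (a + k)
        calc dist (W a) (W (a + (k + 1 : ℕ)))
            ≤ dist (W a) (W (a + k)) + dist (W (a + k)) (W (a + k + 1)) := by
              have : (a + (k + 1 : ℕ)) = (a + k) + 1 := by push_cast; ring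
              rw [this]
              exact dist_triangle _ _ _
          _ ≤ (k : ℝ) + 1 := by linarith
          _ = ((k + 1 : ℕ) : ℝ) := by push_cast; ring
    intro a b
    rcases le_total a b with hab | hab
    · obtain ⟨k, hk⟩ : ∃ k : ℕ, b = a + k := ⟨(b - a).toNat, by omega⟩
      subst hk
      have := hsegN k a
      have habs : |(a : ℝ) - ((a + k : ℤ) : ℝ)| = (k : ℝ) := by
        push_cast
        rw [abs_sub_comm]
        rw [abs_of_nonneg (by linarith [Nat.cast_nonneg (α := ℝ) k])]
        ring
      rw [habs]
      exact this
    · obtain ⟨k, hk⟩ : ∃ k : ℕ, a = b + k := ⟨(a - b).toNat, by omega⟩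
      subst hk
      have := hsegN k b
      have habs : |((b + k : ℤ) : ℝ) - (b : ℝ)| = (k : ℝ) := by
        push_cast
        rw [abs_of_nonneg (by linarith [Nat.cast_nonneg (α := ℝ) k])]
        ring
      rw [habs, dist_comm]
      exact this
  · -- multiplicity ≤ 3
    intro t s hs
    rcases s.eq_empty_or_nonempty with rfl | ⟨a₀, ha₀⟩
    · simp
    have hsame : ∀ a ∈ s, wfun a = wfun a₀ := by
      intro a ha
      apply LogWalk.psi_inj enum hconn hacyc hinj hadj r (wfun a).length _ _ le_rfl
        (hvalid a) (hvalid a₀)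
      rw [show LogWalk.psi enum r (wfun a) = W a from rfl,
        show LogWalk.psi enum r (wfun a₀) = W a₀ from rfl, hs a ha, hs a₀ ha₀]
    set t₀ := wfun a₀ with ht₀
    set K := (s.sup fun a => a.natAbs) + 1 with hK
    have hsupK : ∀ a ∈ s, a.natAbs < K := by
      intro a ha
      have h := Finset.le_sup (f := fun a : ℤ => a.natAbs) ha
      omega
    have hKlen : K < 2 ^ K := Nat.lt_two_pow_self
    -- positive part
    set sP := s.filter (fun a => 0 ≤ a) with hsP
    set sN := s.filter (fun a => ¬ 0 ≤ a) with hsN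
    have hcardsplit : sP.card + sN.card = s.card :=
      Finset.card_filter_add_card_filter_not _
    have hPbound : sP.card ≤ LogWalk.cnt t₀ (LogWalk.bigP K) := by
      have hinjP : Set.InjOn Int.toNat sP := by
        intro x hx y hy hxy
        have hx' := Finset.mem_filter.mp hx
        have hy' := Finset.mem_filter.mp hy
        omega
      rw [← Finset.card_image_of_injOn hinjP]
      apply LogWalk.card_le_cnt
      intro i hi
      obtain ⟨a, ha, rfl⟩ := Finset.mem_image.mp hi
      have ha' := Finset.mem_filter.mp ha
      have hlen : a.toNat < (LogWalk.bigP K).length := by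
        have h1 : a.toNat < K := by have := hsupK a ha'.1; omega
        exact lt_of_lt_of_le (lt_trans h1 hKlen) (LogWalk.bigP_length K)
      refine ⟨hlen, ?_⟩
      rw [← LogWalk.wp_eq hlen]
      have := hsame a ha'.1
      rw [hwfun] at this
      simp only [if_pos ha'.2] at this
      exact this
    have hNbound : sN.card ≤ LogWalk.cnt t₀ (LogWalk.bigN K) := by
      have hinjN : Set.InjOn (fun a : ℤ => a.natAbs - 1) sN := by
        intro x hx y hy hxy
        have hx' := Finset.mem_filter.mp hx
        have hy' := Finset.mem_filter.mp hy
        simp only at hxy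
        omega
      rw [← Finset.card_image_of_injOn hinjN]
      apply LogWalk.card_le_cnt
      intro i hi
      obtain ⟨a, ha, rfl⟩ := Finset.mem_image.mp hi
      have ha' := Finset.mem_filter.mp ha
      have hlen : a.natAbs - 1 < (LogWalk.bigN K).length := by
        have h1 : a.natAbs - 1 < K := by have := hsupK a ha'.1; omega
        exact lt_of_lt_of_le (lt_trans h1 hKlen) (LogWalk.bigN_length K)
      refine ⟨hlen, ?_⟩
      rw [← LogWalk.wn_eq hlen]
      have := hsame a ha'.1
      rw [hwfun] at this
      simp only [if_neg ha'.2] at this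
      exact this
    have htot := LogWalk.total_cnt t₀ K K
    omega
  · -- logarithmic bound
    intro b
    have hlevel := (LogWalk.psi_level enum hconn hacyc hinj hadj r (wfun b) (hvalid b)).1
    have hDeq : dist (W 0) (W b) = ((wfun b).length : ℝ) := by
      rw [hW0, hWdef]
      simp only []
      rw [hdist, hlevel]
    set m := b.natAbs + 1 with hm
    have hlen : (wfun b).length ≤ 2 * (Nat.log 2 m + 1) + 2 := by
      rw [hwfun]
      by_cases h0 : 0 ≤ b
      · simp only [if_pos h0]
        have := LogWalk.wp_len b.toNat
        rw [show b.toNat + 1 = m from by omega] at this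
        omega
      · simp only [if_neg h0]
        have := LogWalk.wn_len (b.natAbs - 1)
        have hmono : Nat.log 2 (b.natAbs - 1 + 1) ≤ Nat.log 2 m :=
          Nat.log_mono_right (by omega)
        omega
    have hlog : (Nat.log 2 m : ℝ) ≤ 2 * Real.log m := by
      have h1 : (Nat.log 2 m : ℝ) ≤ Real.logb 2 m := Real.natLog_le_logb m 2
      have h2 : Real.logb 2 m = Real.log m / Real.log 2 := rfl
      have hlog2 : (0.6931471803 : ℝ) < Real.log 2 := Real.log_two_gt_d9
      have hm1 : (1 : ℝ) ≤ (m : ℝ) := by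
        have : 1 ≤ m := by omega
        exact_mod_cast this
      have hlm : 0 ≤ Real.log m := Real.log_nonneg hm1
      have h3 : Real.log m / Real.log 2 ≤ 2 * Real.log m := by
        rw [div_le_iff₀ (by linarith)]
        nlinarith
      calc (Nat.log 2 m : ℝ) ≤ Real.logb 2 m := h1
        _ = Real.log m / Real.log 2 := h2
        _ ≤ 2 * Real.log m := h3
    have hmabs : (m : ℝ) = 1 + |(b : ℝ)| := by
      rw [hm]
      push_cast [Nat.cast_natAbs]
      ring
    rw [hDeq]
    have hcast : ((wfun b).length : ℝ) ≤ 2 * ((Nat.log 2 m : ℝ) + 1) + 2 := by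
      exact_mod_cast hlen
    have hlogpos : 0 ≤ Real.log (1 + |(b:ℝ)|) := by
      apply Real.log_nonneg
      have := abs_nonneg ((b : ℝ))
      linarith
    calc ((wfun b).length : ℝ) ≤ 2 * ((Nat.log 2 m : ℝ) + 1) + 2 := hcast
      _ ≤ 2 * (2 * Real.log m + 1) + 2 := by linarith
      _ = 4 * Real.log m + 4 := by ring
      _ = 4 * Real.log (1 + |(b:ℝ)|) + 4 := by rw [hmabs]
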